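/- Let 0≤n≤N be integers and f∈Ker L_n. Then ⟨R_{N−1}R_{N−2}⋯R_n f, R_{N−1}R_{N−2}⋯R_n f⟩_{V_{h,N}} = q^{−(N−n)(N+n+1)/2}(q;q)_{N−n}(A_h q^{2n+h};q)_{N−n} · ⟨f,f⟩_{V_{h,n}}. Moreover, if either 0<α_i<q^{−1} for all i, or α_i>q^{−N} for all i, then the linear map Ker L_n → V_{h,N}, f ↦ R_{N−1}R_{N−2}⋯R_n f, is injective. -/

import Mathlib

open Finset

noncomputable section

/-- q-shifted factorial `(a;q)_m`. -/
def qPoch (q a : ℝ) (m : ℕ) : ℝ := ∏ k ∈ Finset.range m, (1 - a * q ^ k)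

/-- Partial sum `X_k = x_1 + ⋯ + x_k` (entries of index `< k`, 0-indexed). -/
def Xlt {h : ℕ} (x : Fin h → ℕ) (k : ℕ) : ℕ := ∑ j : Fin h, if (j : ℕ) < k then x j else 0

/-- Partial product `A_k = α_1 ⋯ α_k` (entries of index `< k`, 0-indexed). -/
def Apar {h : ℕ} (α : Fin h → ℝ) (k : ℕ) : ℝ := ∏ j : Fin h, if (j : ℕ) < k then α j else 1

/-- Raising operator `R_N : V_{h,N} → V_{h,N+1}`. -/
def Rop (q : ℝ) {h : ℕ} (N : ℕ) (f : (Fin h → ℕ) → ℂ) : (Fin h → ℕ) → ℂ := fun x =>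
  ∑ i : Fin h, (q : ℂ) ^ ((Xlt x i : ℤ) - N - 1) * (1 - (q : ℂ) ^ (x i)) *
    f (Function.update x i (x i - 1))

/-- Lowering operator `L_N : V_{h,N} → V_{h,N-1}` (its defining formula does not involve `N`). -/
def Lop (q : ℝ) {h : ℕ} (α : Fin h → ℝ) (f : (Fin h → ℕ) → ℂ) : (Fin h → ℕ) → ℂ := fun x =>
  ∑ j : Fin h, ((Apar α j : ℝ) : ℂ) * (q : ℂ) ^ ((j : ℕ) + Xlt x j) *
    ((α j : ℂ) * (q : ℂ) ^ (x j + 1) - 1) * f (Function.update x j (x j + 1))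

/-- The multidimensional q-Hahn operator `D_N : V_{h,N} → V_{h,N}`. -/
def Dop (q : ℝ) {h : ℕ} (α : Fin h → ℝ) (N : ℕ) (f : (Fin h → ℕ) → ℂ) : (Fin h → ℕ) → ℂ :=
  fun x =>
    (∑ i : Fin h, ∑ j : Fin h,
      if i ≠ j then
        ((Apar α j : ℝ) : ℂ) *
          (q : ℂ) ^ ((((j : ℕ) + Xlt x j + Xlt x i : ℕ) : ℤ) - N -
            (if (i : ℕ) < (j : ℕ) then 1 else 0)) *
          ((α j : ℂ) * (q : ℂ) ^ (x j + 1) - 1) * (1 - (q : ℂ) ^ (x i)) *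
          f (Function.update (Function.update x j (x j + 1)) i (x i - 1))
      else 0)
    + ((∑ j : Fin h,
          ((Apar α j : ℝ) : ℂ) * (q : ℂ) ^ ((((j : ℕ) + 2 * Xlt x j : ℕ) : ℤ) - N) *
            ((α j : ℂ) * (q : ℂ) ^ (x j) - 1) * (1 - (q : ℂ) ^ (x j)))
        + (((Apar α h : ℝ) : ℂ) * (q : ℂ) ^ (((h + N : ℕ) : ℤ) - 1) - 1) *
            (1 - (q : ℂ) ^ (-(N : ℤ)))) * f x

/-- Scalar product on `V_{h,N}`. -/
def innerV (q : ℝ) {h : ℕ} (α : Fin h → ℝ) (N : ℕ) (f g : (Fin h → ℕ) → ℂ) : ℂ :=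
  (q : ℂ) ^ (N * (N + 1) / 2) *
    ∑ x ∈ Finset.Nat.antidiagonalTuple h N,
      (∏ i : Fin h, ((qPoch q (q * α i) (x i) / qPoch q q (x i) : ℝ) : ℂ) *
        ((α i * q : ℝ) : ℂ) ^ ((N : ℤ) - Xlt x ((i : ℕ) + 1))) *
      f x * (starRingEnd ℂ) (g x)

/-- `RopIter q n k f = R_{n+k-1} ⋯ R_{n+1} R_n f`. -/
def RopIter (q : ℝ) {h : ℕ} (n : ℕ) : ℕ → ((Fin h → ℕ) → ℂ) → ((Fin h → ℕ) → ℂ)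
  | 0, f => f
  | k + 1, f => Rop q (n + k) (RopIter q n k f)


section helpers

variable {h : ℕ}

variable {h : ℕ}

lemma Xlt_update (x : Fin h → ℕ) (i : Fin h) (v : ℕ) (k : ℕ) :
    Xlt (Function.update x i v) k + (if (i:ℕ) < k then x i else 0)
      = Xlt x k + (if (i:ℕ) < k then v else 0) := by
  have e1 : (fun j : Fin h => if (j:ℕ) < k then Function.update x i v j else 0)
      = Function.update (fun j : Fin h => if (j:ℕ) < k then x j else 0) i
          (if (i:ℕ) < k then v else 0) := by
    funext j
    rcases eq_or_ne j i with rfl | hj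
    · simp
    · simp [Function.update_of_ne hj]
  unfold Xlt
  rw [e1, Finset.sum_update_of_mem (Finset.mem_univ i),
    Finset.sum_eq_sum_sdiff_singleton_add (Finset.mem_univ i)
      (fun j : Fin h => if (j:ℕ) < k then x j else 0)]
  ring

lemma Xlt_update_succ (x : Fin h → ℕ) (i : Fin h) (k : ℕ) :
    Xlt (Function.update x i (x i + 1)) k = Xlt x k + (if (i:ℕ) < k then 1 else 0) := by
  have := Xlt_update x i (x i + 1) k
  split_ifs at this ⊢ <;> omega

lemma Xlt_update_pred (x : Fin h → ℕ) (i : Fin h) (k : ℕ) (hx : x i ≠ 0) :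
    Xlt (Function.update x i (x i - 1)) k + (if (i:ℕ) < k then 1 else 0) = Xlt x k := by
  have := Xlt_update x i (x i - 1) k
  split_ifs at this ⊢ <;> omega

lemma sum_update_succ (x : Fin h → ℕ) (i : Fin h) :
    ∑ j, Function.update x i (x i + 1) j = (∑ j, x j) + 1 := by
  rw [Finset.sum_update_of_mem (Finset.mem_univ i),
    Finset.sum_eq_sum_sdiff_singleton_add (Finset.mem_univ i) x]
  ring

lemma sum_update_pred (x : Fin h → ℕ) (i : Fin h) (hx : x i ≠ 0) :
    (∑ j, Function.update x i (x i - 1) j) + 1 = ∑ j, x j := by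
  rw [Finset.sum_update_of_mem (Finset.mem_univ i),
    Finset.sum_eq_sum_sdiff_singleton_add (Finset.mem_univ i) x]
  omega

lemma Xlt_succ_fin (x : Fin h → ℕ) (i : Fin h) :
    Xlt x ((i:ℕ) + 1) = Xlt x i + x i := by
  have key : ∀ j : Fin h, (if (j:ℕ) < (i:ℕ)+1 then x j else 0)
      = (if (j:ℕ) < (i:ℕ) then x j else 0) + (if j = i then x j else 0) := by
    intro j
    rcases eq_or_ne j i with rfl | hj
    · simp
    · have : (j:ℕ) ≠ (i:ℕ) := fun hc => hj (Fin.ext hc)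
      split_ifs <;> omega
  unfold Xlt
  rw [Finset.sum_congr rfl (fun j _ => key j),
    Finset.sum_add_distrib, Finset.sum_ite_eq' Finset.univ i x, if_pos (Finset.mem_univ i)]

lemma Xlt_top (x : Fin h → ℕ) {k : ℕ} (hk : h ≤ k) : Xlt x k = ∑ j, x j :=
  Finset.sum_congr rfl (fun j _ => if_pos (lt_of_lt_of_le j.isLt hk))

lemma Xlt_le_sum (x : Fin h → ℕ) (k : ℕ) : Xlt x k ≤ ∑ j, x j :=
  Finset.sum_le_sum (fun j _ => by split_ifs <;> omega)

lemma Apar_zero (α : Fin h → ℝ) : Apar α 0 = 1 := by simp [Apar]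

lemma Apar_succ_fin (α : Fin h → ℝ) (i : Fin h) :
    Apar α ((i:ℕ) + 1) = Apar α i * α i := by
  have key : ∀ j : Fin h, (if (j:ℕ) < (i:ℕ)+1 then α j else 1)
      = (if (j:ℕ) < (i:ℕ) then α j else 1) * (if j = i then α j else 1) := by
    intro j
    rcases eq_or_ne j i with rfl | hj
    · simp
    · have hv : (j:ℕ) ≠ (i:ℕ) := fun hc => hj (Fin.ext hc)
      have hiff : ((j:ℕ) < (i:ℕ)+1) ↔ ((j:ℕ) < (i:ℕ)) := by omega
      rw [if_neg hj, mul_one]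
      by_cases hlt : (j:ℕ) < (i:ℕ)
      · rw [if_pos (by omega), if_pos hlt]
      · rw [if_neg (by omega), if_neg hlt]
  unfold Apar
  rw [Finset.prod_congr rfl (fun j _ => key j),
    Finset.prod_mul_distrib, Finset.prod_ite_eq' Finset.univ i α, if_pos (Finset.mem_univ i)]

lemma Apar_top (α : Fin h → ℝ) {k : ℕ} (hk : h ≤ k) : Apar α k = ∏ j, α j :=
  Finset.prod_congr rfl (fun j _ => if_pos (lt_of_lt_of_le j.isLt hk))

lemma Apar_pos (α : Fin h → ℝ) (hα : ∀ i, 0 < α i) (k : ℕ) : 0 < Apar α k :=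
  Finset.prod_pos (fun j _ => by split_ifs; exacts [hα j, one_pos])

lemma card_filter_lt (i : Fin h) :
    (Finset.univ.filter (fun k : Fin h => (k:ℕ) < (i:ℕ))).card = (i:ℕ) := by
  have : (Finset.univ.filter (fun k : Fin h => (k:ℕ) < (i:ℕ))) = Finset.Iio i := by
    ext j
    simp only [Finset.mem_filter, Finset.mem_univ, true_and, Finset.mem_Iio, Fin.lt_def]
  rw [this, Fin.card_Iio]

lemma qPoch_succ (q a : ℝ) (m : ℕ) : qPoch q a (m+1) = qPoch q a m * (1 - a * q ^ m) :=
  Finset.prod_range_succ _ _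

lemma qPoch_q_pos {q : ℝ} (hq0 : 0 < q) (hq1 : q < 1) (m : ℕ) : 0 < qPoch q q m := by
  refine Finset.prod_pos (fun k _ => ?_)
  have : q * q ^ k < 1 := by
    calc q * q ^ k ≤ q * 1 := by
          exact mul_le_mul_of_nonneg_left (pow_le_one₀ hq0.le hq1.le) hq0.le
    _ < 1 := by linarith
  linarith


end helpers

section comm
variable {h : ℕ}

def tLf (q : ℝ) (α : Fin h → ℝ) (m : ℕ) (f : (Fin h → ℕ) → ℂ) (x : Fin h → ℕ)
    (j i : Fin h) : ℂ :=
  ((Apar α j : ℝ) : ℂ) * (q : ℂ) ^ ((j : ℕ) + Xlt x j) *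
      ((α j : ℂ) * (q : ℂ) ^ (x j + 1) - 1) *
    ((q : ℂ) ^ ((Xlt (Function.update x j (x j + 1)) i : ℤ) - m - 1) *
      (1 - (q : ℂ) ^ (Function.update x j (x j + 1) i)) *
      f (Function.update (Function.update x j (x j + 1)) i
          (Function.update x j (x j + 1) i - 1)))

def tRf (q : ℝ) (α : Fin h → ℝ) (m : ℕ) (f : (Fin h → ℕ) → ℂ) (x : Fin h → ℕ)
    (i j : Fin h) : ℂ :=
  (q : ℂ) ^ ((Xlt x i : ℤ) - (m - 1 : ℕ) - 1) * (1 - (q : ℂ) ^ (x i)) *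
    (((Apar α j : ℝ) : ℂ) * (q : ℂ) ^ ((j : ℕ) + Xlt (Function.update x i (x i - 1)) j) *
      ((α j : ℂ) * (q : ℂ) ^ (Function.update x i (x i - 1) j + 1) - 1) *
      f (Function.update (Function.update x i (x i - 1)) j
          (Function.update x i (x i - 1) j + 1)))

lemma collect1 {Q : ℂ} (hQ : Q ≠ 0) (a : ℕ) (E : ℤ) (A B C F : ℂ) :
    (A * Q ^ a * B) * (Q ^ E * C * F) = Q ^ ((a:ℤ) + E) * (A * B * C * F) := by
  rw [zpow_add₀ hQ, zpow_natCast]; ring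

lemma collect2 {Q : ℂ} (hQ : Q ≠ 0) (a : ℕ) (E : ℤ) (A B C F : ℂ) :
    (Q ^ E * C) * ((A * Q ^ a * B) * F) = Q ^ ((a:ℤ) + E) * (A * B * C * F) := by
  rw [zpow_add₀ hQ, zpow_natCast]; ring

lemma offdiag_eq (q : ℝ) (hq0 : 0 < q) (α : Fin h → ℝ) (m : ℕ) (f : (Fin h → ℕ) → ℂ)
    (x : Fin h → ℕ) (hx : ∑ i, x i = m) (j i : Fin h) (hij : i ≠ j) :
    tLf q α m f x j i = tRf q α m f x i j := by
  have hQ : (q:ℂ) ≠ 0 := Complex.ofReal_ne_zero.mpr hq0.ne'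
  by_cases hxi : x i = 0
  · have h1 : Function.update x j (x j + 1) i = x i := Function.update_of_ne hij _ _
    simp only [tLf, tRf, h1, hxi, pow_zero, sub_self, mul_zero, zero_mul]
  · have hm : x i ≤ m := hx ▸ Finset.single_le_sum (f := x) (fun _ _ => Nat.zero_le _)
      (Finset.mem_univ i)
    have hm1 : 1 ≤ m := le_trans (Nat.one_le_iff_ne_zero.mpr hxi) hm
    have hu1 : Function.update x j (x j + 1) i = x i := Function.update_of_ne hij _ _
    have hu2 : Function.update x i (x i - 1) j = x j := Function.update_of_ne (Ne.symm hij) _ _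
    have harg : Function.update (Function.update x j (x j + 1)) i (x i - 1)
        = Function.update (Function.update x i (x i - 1)) j (x j + 1) :=
      (Function.update_comm hij _ _ _).symm
    have e1 : Xlt (Function.update x j (x j + 1)) (i:ℕ)
        = Xlt x i + (if (j:ℕ) < (i:ℕ) then 1 else 0) := Xlt_update_succ x j i
    have e2 : Xlt (Function.update x i (x i - 1)) (j:ℕ)
        + (if (i:ℕ) < (j:ℕ) then 1 else 0) = Xlt x j := Xlt_update_pred x i j hxi
    have hvne : (i:ℕ) ≠ (j:ℕ) := fun hc => hij (Fin.ext hc)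
    simp only [tLf, tRf, hu1, hu2, harg]
    rw [collect1 hQ, collect2 hQ]
    rcases Nat.lt_or_ge (j:ℕ) (i:ℕ) with hlt | hge
    · rw [if_pos hlt] at e1
      rw [if_neg (by omega)] at e2
      congr 2
      omega
    · rw [if_neg (by omega)] at e1
      rw [if_pos (by omega)] at e2
      congr 2
      omega

end comm
lemma Xlt_zero {h : ℕ} (x : Fin h → ℕ) : Xlt x 0 = 0 := by simp [Xlt]

section comm2
variable {h : ℕ}

def gfun (q : ℝ) (α : Fin h → ℝ) (m : ℕ) (x : Fin h → ℕ) (k : ℕ) : ℂ :=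
  ((Apar α k : ℝ) : ℂ) * (q : ℂ) ^ (2 * (Xlt x k : ℤ) + k - 1 - m)

lemma Lop_Rop_expand (q : ℝ) (α : Fin h → ℝ) (m : ℕ) (f : (Fin h → ℕ) → ℂ) (x : Fin h → ℕ) :
    Lop q α (Rop q m f) x = ∑ j : Fin h, ∑ i : Fin h, tLf q α m f x j i := by
  simp only [Lop, Rop, Finset.mul_sum, tLf]

lemma Rop_Lop_expand (q : ℝ) (α : Fin h → ℝ) (m : ℕ) (f : (Fin h → ℕ) → ℂ) (x : Fin h → ℕ) :
    Rop q (m-1) (Lop q α f) x = ∑ i : Fin h, ∑ j : Fin h, tRf q α m f x i j := by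
  simp only [Rop, Lop, Finset.mul_sum, tRf]

lemma diag_eq (q : ℝ) (hq0 : 0 < q) (α : Fin h → ℝ) (m : ℕ) (f : (Fin h → ℕ) → ℂ)
    (x : Fin h → ℕ) (hx : ∑ i, x i = m) (j : Fin h) :
    tLf q α m f x j j = tRf q α m f x j j
      + (1 - (q:ℂ)) * (gfun q α m x ((j:ℕ)+1) - gfun q α m x (j:ℕ)) * f x := by
  have hQ : (q:ℂ) ≠ 0 := Complex.ofReal_ne_zero.mpr hq0.ne'
  have k1 : Function.update x j (x j + 1) j = x j + 1 := Function.update_self _ _ _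
  have k2 : Xlt (Function.update x j (x j + 1)) (j:ℕ) = Xlt x j := by
    have := Xlt_update_succ x j (j:ℕ); simpa using this
  have k4 : Function.update x j (x j - 1) j = x j - 1 := Function.update_self _ _ _
  have k5 : Xlt (Function.update x j (x j - 1)) (j:ℕ) = Xlt x j := by
    have := Xlt_update x j (x j - 1) (j:ℕ); simpa using this
  by_cases hxj : x j = 0
  · have hR0 : tRf q α m f x j j = 0 := by
      simp only [tRf, hxj, pow_zero, sub_self, mul_zero, zero_mul]
    rw [hR0, zero_add]
    simp only [tLf, k1, k2, Nat.add_sub_cancel, Function.update_idem, Function.update_self,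
      Function.update_eq_self]
    rw [collect1 hQ]
    simp only [gfun, Apar_succ_fin, Xlt_succ_fin]
    simp only [hxj, zero_add, pow_one, add_zero]
    have e1 : 2 * (Xlt x (j:ℕ) : ℤ) + ((((j:ℕ)+1) : ℕ) : ℤ) - 1 - m
        = ((((j:ℕ) + Xlt x (j:ℕ)) : ℕ) : ℤ) + ((Xlt x (j:ℕ) : ℤ) - m - 1) + 1 := by
      push_cast; ring
    have e0 : 2 * (Xlt x (j:ℕ) : ℤ) + ((j:ℕ):ℤ) - 1 - m
        = ((((j:ℕ) + Xlt x (j:ℕ)) : ℕ) : ℤ) + ((Xlt x (j:ℕ) : ℤ) - m - 1) := by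
      push_cast; ring
    rw [e1, e0, zpow_add_one₀ hQ]
    push_cast
    ring
  · have hm1 : 1 ≤ m := by
      have : x j ≤ ∑ i, x i := Finset.single_le_sum (f := x) (fun _ _ => Nat.zero_le _)
        (Finset.mem_univ j)
      omega
    have k7 : x j - 1 + 1 = x j := by omega
    simp only [tLf, tRf, k1, k2, k4, k5, k7, Nat.add_sub_cancel, Function.update_idem,
      Function.update_eq_self]
    rw [collect1 hQ, collect2 hQ]
    have hE2 : (((j:ℕ) + Xlt x (j:ℕ) : ℕ) : ℤ) + ((Xlt x (j:ℕ) : ℤ) - (m-1:ℕ) - 1)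
        = ((((j:ℕ) + Xlt x (j:ℕ)) : ℕ) : ℤ) + ((Xlt x (j:ℕ) : ℤ) - m - 1) + 1 := by
      omega
    rw [hE2, zpow_add_one₀ hQ]
    simp only [gfun, Apar_succ_fin, Xlt_succ_fin]
    have hg1 : 2 * ((Xlt x (j:ℕ) + x j : ℕ) : ℤ) + ((((j:ℕ)+1) : ℕ) : ℤ) - 1 - m
        = (((((j:ℕ) + Xlt x (j:ℕ))) : ℕ) : ℤ) + ((Xlt x (j:ℕ) : ℤ) - m - 1)
          + ((2 * x j + 1 : ℕ) : ℤ) := by push_cast; ring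
    have hg0 : 2 * (Xlt x (j:ℕ) : ℤ) + ((j:ℕ):ℤ) - 1 - m
        = ((((j:ℕ) + Xlt x (j:ℕ)) : ℕ) : ℤ) + ((Xlt x (j:ℕ) : ℤ) - m - 1) := by
      push_cast; ring
    rw [hg1, hg0, zpow_add₀ hQ ((((j:ℕ) + Xlt x (j:ℕ) : ℕ):ℤ) + ((Xlt x (j:ℕ) : ℤ) - m - 1))
      ((2 * x j + 1 : ℕ) : ℤ), zpow_natCast ((q:ℂ)) (2 * x j + 1)]
    push_cast
    ring

lemma comm_LR (q : ℝ) (hq0 : 0 < q) (α : Fin h → ℝ) (m : ℕ) (f : (Fin h → ℕ) → ℂ)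
    (x : Fin h → ℕ) (hx : ∑ i, x i = m) :
    Lop q α (Rop q m f) x = Rop q (m-1) (Lop q α f) x
      + (1 - (q:ℂ)) * (((Apar α h : ℝ):ℂ) * (q:ℂ) ^ ((m:ℤ) + (h:ℤ) - 1)
          - (q:ℂ) ^ (-(m:ℤ) - 1)) * f x := by
  have hQ : (q:ℂ) ≠ 0 := Complex.ofReal_ne_zero.mpr hq0.ne'
  have hsplit : ∀ t : Fin h → Fin h → ℂ, (∑ j : Fin h, ∑ i : Fin h, t j i)
      = (∑ j : Fin h, t j j) + ∑ j : Fin h, ∑ i ∈ Finset.univ.erase j, t j i := by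
    intro t
    rw [← Finset.sum_add_distrib]
    exact Finset.sum_congr rfl fun j _ => (Finset.add_sum_erase _ (t j) (Finset.mem_univ j)).symm
  rw [Lop_Rop_expand, Rop_Lop_expand, hsplit (tLf q α m f x), hsplit (tRf q α m f x)]
  have hoff : (∑ j : Fin h, ∑ i ∈ Finset.univ.erase j, tLf q α m f x j i)
      = ∑ i : Fin h, ∑ j ∈ Finset.univ.erase i, tRf q α m f x i j := by
    rw [Finset.sum_comm' (s := Finset.univ) (t := fun j => Finset.univ.erase j)
      (t' := Finset.univ) (s' := fun i => Finset.univ.erase i)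
      (by intro a b; simp [Finset.mem_erase]; tauto)]
    exact Finset.sum_congr rfl fun i _ => Finset.sum_congr rfl fun j hj =>
      offdiag_eq q hq0 α m f x hx j i (Ne.symm (Finset.mem_erase.mp hj).1)
  have tele : (∑ j : Fin h, (gfun q α m x ((j:ℕ)+1) - gfun q α m x (j:ℕ)))
      = gfun q α m x h - gfun q α m x 0 := by
    rw [Fin.sum_univ_eq_sum_range (fun k => gfun q α m x (k+1) - gfun q α m x k) h]
    exact Finset.sum_range_sub (gfun q α m x) h
  have hdiagsum : (∑ j : Fin h, tLf q α m f x j j)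
      = (∑ j : Fin h, tRf q α m f x j j)
        + (1 - (q:ℂ)) * (gfun q α m x h - gfun q α m x 0) * f x := by
    rw [Finset.sum_congr rfl (fun j _ => diag_eq q hq0 α m f x hx j),
      Finset.sum_add_distrib]
    congr 1
    rw [← Finset.sum_mul, ← Finset.mul_sum, tele]
  have hgh : gfun q α m x h = ((Apar α h : ℝ):ℂ) * (q:ℂ) ^ ((m:ℤ) + (h:ℤ) - 1) := by
    unfold gfun
    rw [Xlt_top x le_rfl, hx]
    congr 1
    rw [show 2 * (m:ℤ) + (h:ℤ) - 1 - (m:ℤ) = (m:ℤ) + (h:ℤ) - 1 by ring]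
  have hg0 : gfun q α m x 0 = (q:ℂ) ^ (-(m:ℤ) - 1) := by
    unfold gfun
    rw [Xlt_zero, Apar_zero]
    push_cast
    rw [one_mul]
    congr 1
    ring
  rw [hoff, hdiagsum, hgh, hg0]
  ring

end comm2
section adjoint
variable {h : ℕ}

def wFac (q : ℝ) (α : Fin h → ℝ) (N : ℕ) (y : Fin h → ℕ) (k : Fin h) : ℂ :=
  ((qPoch q (q * α k) (y k) / qPoch q q (y k) : ℝ) : ℂ) *
    ((α k * q : ℝ) : ℂ) ^ ((N : ℤ) - Xlt y ((k : ℕ) + 1))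

def wC (q : ℝ) (α : Fin h → ℝ) (N : ℕ) (y : Fin h → ℕ) : ℂ :=
  (q : ℂ) ^ (N * (N + 1) / 2) * ∏ k : Fin h, wFac q α N y k

lemma innerV_eq (q : ℝ) (α : Fin h → ℝ) (N : ℕ) (f g : (Fin h → ℕ) → ℂ) :
    innerV q α N f g = ∑ x ∈ Finset.Nat.antidiagonalTuple h N,
      wC q α N x * f x * (starRingEnd ℂ) (g x) := by
  unfold innerV wC wFac
  rw [Finset.mul_sum]
  exact Finset.sum_congr rfl fun x _ => by ring

lemma wFac_shift (q : ℝ) (hq0 : 0 < q) (α : Fin h → ℝ) (hα : ∀ i, 0 < α i) (N : ℕ)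
    (y : Fin h → ℕ) (i k : Fin h) (hki : k ≠ i) :
    wFac q α (N + 1) (Function.update y i (y i + 1)) k
      = wFac q α N y k * (if (k : ℕ) < (i : ℕ) then ((α k * q : ℝ) : ℂ) else 1) := by
  have hb : ((α k * q : ℝ) : ℂ) ≠ 0 :=
    Complex.ofReal_ne_zero.mpr (mul_pos (hα k) hq0).ne'
  have hyk : Function.update y i (y i + 1) k = y k := Function.update_of_ne hki _ _
  have hX : Xlt (Function.update y i (y i + 1)) ((k : ℕ) + 1)
      = Xlt y ((k : ℕ) + 1) + (if (i : ℕ) < (k : ℕ) + 1 then 1 else 0) :=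
    Xlt_update_succ y i _
  have hvne : (k : ℕ) ≠ (i : ℕ) := fun hc => hki (Fin.ext hc)
  unfold wFac
  rw [hyk, hX]
  by_cases hlt : (k : ℕ) < (i : ℕ)
  · rw [if_pos hlt, if_neg (by omega)]
    rw [show ((N + 1 : ℕ) : ℤ) - ((Xlt y ((k:ℕ)+1) + 0 : ℕ) : ℤ)
        = ((N : ℤ) - (Xlt y ((k:ℕ)+1) : ℤ)) + 1 by push_cast; ring]
    rw [zpow_add_one₀ hb]
    ring
  · rw [if_neg hlt, if_pos (by omega), mul_one]
    rw [show ((N + 1 : ℕ) : ℤ) - ((Xlt y ((k:ℕ)+1) + 1 : ℕ) : ℤ)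
        = (N : ℤ) - (Xlt y ((k:ℕ)+1) : ℤ) by push_cast; ring]

lemma prod_ite_aq (q : ℝ) (α : Fin h → ℝ) (i : Fin h) :
    (∏ k : Fin h, (if (k : ℕ) < (i : ℕ) then ((α k * q : ℝ) : ℂ) else 1))
      = ((Apar α i : ℝ) : ℂ) * (q : ℂ) ^ ((i : ℕ)) := by
  have hR : (∏ k : Fin h, (if (k : ℕ) < (i : ℕ) then (α k * q) else 1) : ℝ)
      = Apar α i * q ^ ((i : ℕ)) := by
    have key : ∀ k : Fin h, (if (k:ℕ) < (i:ℕ) then (α k * q) else 1)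
        = (if (k:ℕ) < (i:ℕ) then α k else 1) * (if (k:ℕ) < (i:ℕ) then q else 1) := by
      intro k; split_ifs <;> ring
    rw [Finset.prod_congr rfl (fun k _ => key k), Finset.prod_mul_distrib]
    congr 1
    rw [Finset.prod_ite, Finset.prod_const, Finset.prod_const_one, mul_one, card_filter_lt]
  calc (∏ k : Fin h, (if (k : ℕ) < (i : ℕ) then ((α k * q : ℝ) : ℂ) else 1))
      = ((∏ k : Fin h, (if (k : ℕ) < (i : ℕ) then (α k * q) else 1) : ℝ) : ℂ) := by
        rw [Complex.ofReal_prod]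
        exact Finset.prod_congr rfl fun k _ => by split_ifs <;> simp
    _ = ((Apar α i : ℝ) : ℂ) * (q : ℂ) ^ ((i : ℕ)) := by rw [hR]; push_cast; ring

lemma tri_succ (N : ℕ) : (N + 1) * (N + 1 + 1) / 2 = N * (N + 1) / 2 + (N + 1) := by
  have e : (N + 1) * (N + 1 + 1) = N * (N + 1) + 2 * (N + 1) := by ring
  rw [e, Nat.add_mul_div_left _ _ (by norm_num : 0 < 2)]

lemma weight_ratio (q : ℝ) (hq0 : 0 < q) (hq1 : q < 1) (α : Fin h → ℝ) (hα : ∀ i, 0 < α i)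
    (N : ℕ) (y : Fin h → ℕ) (i : Fin h) :
    wC q α (N + 1) (Function.update y i (y i + 1)) *
        ((q : ℂ) ^ ((Xlt y (i : ℕ) : ℤ) - N - 1) * (1 - (q : ℂ) ^ (y i + 1)))
      = - (wC q α N y * (((Apar α i : ℝ) : ℂ) * (q : ℂ) ^ ((i : ℕ) + Xlt y (i : ℕ)) *
          ((α i : ℂ) * (q : ℂ) ^ (y i + 1) - 1))) := by
  have hQ : (q : ℂ) ≠ 0 := Complex.ofReal_ne_zero.mpr hq0.ne'
  -- i-th factor of the shifted weight
  have hFi : wFac q α (N + 1) (Function.update y i (y i + 1)) i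
      = ((qPoch q (q * α i) (y i + 1) / qPoch q q (y i + 1) : ℝ) : ℂ) *
          ((α i * q : ℝ) : ℂ) ^ ((N : ℤ) - Xlt y ((i : ℕ) + 1)) := by
    unfold wFac
    rw [Function.update_self, Xlt_update_succ y i ((i:ℕ)+1), if_pos (by omega)]
    rw [show ((N + 1 : ℕ) : ℤ) - ((Xlt y ((i:ℕ)+1) + 1 : ℕ) : ℤ)
        = (N : ℤ) - (Xlt y ((i:ℕ)+1) : ℤ) by push_cast; ring]
  have hwL : wC q α (N + 1) (Function.update y i (y i + 1))
      = (q : ℂ) ^ ((N + 1) * (N + 1 + 1) / 2) *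
          (((qPoch q (q * α i) (y i + 1) / qPoch q q (y i + 1) : ℝ) : ℂ) *
            ((α i * q : ℝ) : ℂ) ^ ((N : ℤ) - Xlt y ((i : ℕ) + 1)) *
            ((∏ k ∈ Finset.univ.erase i, wFac q α N y k) *
              (((Apar α i : ℝ) : ℂ) * (q : ℂ) ^ ((i : ℕ))))) := by
    unfold wC
    rw [← Finset.mul_prod_erase _ _ (Finset.mem_univ i), hFi]
    rw [Finset.prod_congr rfl (fun k hk => wFac_shift q hq0 α hα N y i k
      (Finset.mem_erase.mp hk).1), Finset.prod_mul_distrib]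
    rw [Finset.prod_erase (f := fun k : Fin h => if (k:ℕ) < (i:ℕ) then ((α k * q : ℝ):ℂ) else 1)
      (a := i) Finset.univ (if_neg (lt_irrefl _)), prod_ite_aq]
  have hwR : wC q α N y
      = (q : ℂ) ^ (N * (N + 1) / 2) *
          (((qPoch q (q * α i) (y i) / qPoch q q (y i) : ℝ) : ℂ) *
            ((α i * q : ℝ) : ℂ) ^ ((N : ℤ) - Xlt y ((i : ℕ) + 1)) *
            (∏ k ∈ Finset.univ.erase i, wFac q α N y k)) := by
    unfold wC
    rw [← Finset.mul_prod_erase _ _ (Finset.mem_univ i)]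
    unfold wFac
    ring
  rw [hwL, hwR]
  -- scalar identity
  have hpB : (0:ℝ) < qPoch q q (y i) := qPoch_q_pos hq0 hq1 _
  have hfz : (0:ℝ) < 1 - q * q ^ (y i) := by
    have : q * q ^ (y i) < 1 := by
      calc q * q ^ (y i) ≤ q * 1 := mul_le_mul_of_nonneg_left (pow_le_one₀ hq0.le hq1.le) hq0.le
      _ < 1 := by linarith
    linarith
  rw [qPoch_succ q (q * α i) (y i), qPoch_succ q q (y i), tri_succ N, pow_add,
    pow_add (q:ℂ) (i:ℕ) (Xlt y (i:ℕ)),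
    show (q:ℂ) ^ ((Xlt y (i:ℕ) : ℤ) - N - 1)
        = (q:ℂ) ^ (Xlt y (i:ℕ)) * ((q:ℂ) ^ ((N+1 : ℕ)))⁻¹ by
      rw [show ((Xlt y (i:ℕ) : ℤ) - N - 1) = ((Xlt y (i:ℕ) : ℕ) : ℤ) + (-(((N+1:ℕ) : ℤ))) by
        push_cast; ring, zpow_add₀ hQ, zpow_neg, zpow_natCast, zpow_natCast]]
  have hBne : ((qPoch q q (y i) : ℝ) : ℂ) ≠ 0 := by
    exact_mod_cast hpB.ne'
  have hfzC : ((1 - q * q ^ (y i) : ℝ) : ℂ) ≠ 0 := by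
    exact_mod_cast hfz.ne'
  push_cast
  push_cast at hBne hfzC
  field_simp
  ring

end adjoint
section adjoint2
variable {h : ℕ}

lemma adjoint (q : ℝ) (hq0 : 0 < q) (hq1 : q < 1) (α : Fin h → ℝ) (hα : ∀ i, 0 < α i)
    (N : ℕ) (f g : (Fin h → ℕ) → ℂ) :
    innerV q α (N + 1) (Rop q N f) g = - innerV q α N f (Lop q α g) := by
  classical
  rw [innerV_eq, innerV_eq]
  have step1 : ∑ x ∈ Finset.Nat.antidiagonalTuple h (N+1),
      wC q α (N+1) x * Rop q N f x * (starRingEnd ℂ) (g x)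
      = ∑ i : Fin h, ∑ x ∈ Finset.Nat.antidiagonalTuple h (N+1),
          wC q α (N+1) x * ((q:ℂ) ^ ((Xlt x (i:ℕ) : ℤ) - N - 1) * (1 - (q:ℂ) ^ (x i)) *
            f (Function.update x i (x i - 1))) * (starRingEnd ℂ) (g x) := by
    rw [Finset.sum_comm]
    refine Finset.sum_congr rfl fun x _ => ?_
    rw [Rop, Finset.mul_sum, Finset.sum_mul]
  rw [step1]
  have key : ∀ i : Fin h, (∑ x ∈ Finset.Nat.antidiagonalTuple h (N+1),
      wC q α (N+1) x * ((q:ℂ) ^ ((Xlt x (i:ℕ) : ℤ) - N - 1) * (1 - (q:ℂ) ^ (x i)) *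
        f (Function.update x i (x i - 1))) * (starRingEnd ℂ) (g x))
      = ∑ y ∈ Finset.Nat.antidiagonalTuple h N,
          (- (wC q α N y * (((Apar α (i:ℕ) : ℝ):ℂ) * (q:ℂ) ^ ((i:ℕ) + Xlt y (i:ℕ)) *
            ((α i : ℂ) * (q:ℂ) ^ (y i + 1) - 1)))) * f y *
            (starRingEnd ℂ) (g (Function.update y i (y i + 1))) := by
    intro i
    rw [← Finset.sum_filter_of_ne (p := fun x : Fin h → ℕ => x i ≠ 0)
      (fun x _ hne h0 => hne (by simp [h0]))]
    refine Finset.sum_nbij' (fun x => Function.update x i (x i - 1))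
      (fun y => Function.update y i (y i + 1)) ?_ ?_ ?_ ?_ ?_
    · -- maps filter → AT N
      intro x hx
      obtain ⟨hx1, hx2⟩ := Finset.mem_filter.mp hx
      have hsum := Finset.Nat.mem_antidiagonalTuple.mp hx1
      have hupd := sum_update_pred x i hx2
      refine Finset.Nat.mem_antidiagonalTuple.mpr ?_
      omega
    · intro y hy
      have hsum := Finset.Nat.mem_antidiagonalTuple.mp hy
      refine Finset.mem_filter.mpr ⟨Finset.Nat.mem_antidiagonalTuple.mpr ?_, ?_⟩
      · rw [sum_update_succ, hsum]
      · simp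
    · intro x hx
      have hxi : x i ≠ 0 := (Finset.mem_filter.mp hx).2
      rw [Function.update_self, Function.update_idem, show x i - 1 + 1 = x i from by omega]
      exact Function.update_eq_self i x
    · intro y hy
      rw [Function.update_self, Function.update_idem, Nat.add_sub_cancel]
      exact Function.update_eq_self i y
    · intro x hx
      have hxi : x i ≠ 0 := (Finset.mem_filter.mp hx).2
      have hXy : Xlt (Function.update x i (x i - 1)) (i:ℕ) = Xlt x (i:ℕ) := by
        have := Xlt_update x i (x i - 1) (i:ℕ); simpa using this
      have hwr := weight_ratio q hq0 hq1 α hα N (Function.update x i (x i - 1)) i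
      rw [Function.update_self, Function.update_idem, show x i - 1 + 1 = x i from by omega,
        Function.update_eq_self, hXy] at hwr
      rw [Function.update_self, Function.update_idem, show x i - 1 + 1 = x i from by omega,
        Function.update_eq_self, hXy]
      linear_combination (f (Function.update x i (x i - 1)) * (starRingEnd ℂ) (g x)) * hwr
  rw [Finset.sum_congr rfl (fun i _ => key i), Finset.sum_comm, ← Finset.sum_neg_distrib]
  refine Finset.sum_congr rfl fun y _ => ?_
  have hconj : (starRingEnd ℂ) (Lop q α g y)
      = ∑ j : Fin h, ((Apar α (j:ℕ) : ℝ):ℂ) * (q:ℂ) ^ ((j:ℕ) + Xlt y (j:ℕ)) *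
          ((α j : ℂ) * (q:ℂ) ^ (y j + 1) - 1) *
          (starRingEnd ℂ) (g (Function.update y j (y j + 1))) := by
    rw [Lop, map_sum]
    refine Finset.sum_congr rfl fun j _ => ?_
    simp [map_mul, map_sub, map_pow, map_one, Complex.conj_ofReal]
  rw [hconj, Finset.mul_sum, ← Finset.sum_neg_distrib]
  refine Finset.sum_congr rfl fun j _ => ?_
  ring

end adjoint2
section chain
variable {h : ℕ}

def lamC (q : ℝ) (α : Fin h → ℝ) (n k : ℕ) : ℂ :=
  -((q:ℂ) ^ (n + k))⁻¹ * (1 - (q:ℂ) ^ k) *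
    (1 - ((Apar α h : ℝ) : ℂ) * (q:ℂ) ^ (2 * n + k + (h - 1)))

lemma lamC_conj (q : ℝ) (α : Fin h → ℝ) (n k : ℕ) :
    (starRingEnd ℂ) (lamC q α n k) = lamC q α n k := by
  simp [lamC, map_neg, map_inv₀, map_mul, map_sub, map_one, map_pow, Complex.conj_ofReal]

lemma cast_pow_c1 (q : ℝ) (hh : 1 ≤ h) (m : ℕ) :
    (q:ℂ) ^ ((m:ℤ) + (h:ℤ) - 1) = (q:ℂ) ^ ((m + (h - 1) : ℕ)) := by
  rw [← zpow_natCast (q:ℂ) (m + (h-1))]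
  congr 1
  omega

lemma cast_pow_c2 (q : ℝ) (m : ℕ) :
    (q:ℂ) ^ (-(m:ℤ) - 1) = ((q:ℂ) ^ ((m + 1 : ℕ)))⁻¹ := by
  rw [show -(m:ℤ) - 1 = -(((m+1:ℕ)):ℤ) by push_cast; ring, zpow_neg, zpow_natCast]

lemma chain_lemma (q : ℝ) (hq0 : 0 < q) (α : Fin h → ℝ) (hh : 1 ≤ h) (n : ℕ)
    (f : (Fin h → ℕ) → ℂ)
    (hker : ∀ x : Fin h → ℕ, (∑ i, x i) + 1 = n → Lop q α f x = 0) :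
    ∀ k (x : Fin h → ℕ), (∑ i, x i) = n + k →
      Lop q α (RopIter q n (k+1) f) x = lamC q α n (k+1) * RopIter q n k f x := by
  have hQ : (q:ℂ) ≠ 0 := Complex.ofReal_ne_zero.mpr hq0.ne'
  intro k
  induction k with
  | zero =>
    intro x hx
    have hx' : ∑ i, x i = n := by simpa using hx
    have hcomm := comm_LR q hq0 α n f x hx'
    have h0 : Rop q (n-1) (Lop q α f) x = 0 := by
      rw [Rop]
      refine Finset.sum_eq_zero fun i _ => ?_
      by_cases hxi : x i = 0
      · simp [hxi]
      · rw [hker (Function.update x i (x i - 1))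
          (by have := sum_update_pred x i hxi; omega), mul_zero]
    have hI1 : (1 - (q:ℂ)) * (((Apar α h : ℝ):ℂ) * (q:ℂ) ^ ((n:ℤ) + (h:ℤ) - 1)
        - (q:ℂ) ^ (-(n:ℤ) - 1)) = lamC q α n 1 := by
      rw [cast_pow_c1 q hh n, cast_pow_c2 q n]
      unfold lamC
      field_simp
      ring
    calc Lop q α (RopIter q n (0+1) f) x = Lop q α (Rop q n f) x := rfl
      _ = Rop q (n-1) (Lop q α f) x
          + (1 - (q:ℂ)) * (((Apar α h : ℝ):ℂ) * (q:ℂ) ^ ((n:ℤ) + (h:ℤ) - 1)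
            - (q:ℂ) ^ (-(n:ℤ) - 1)) * f x := hcomm
      _ = lamC q α n 1 * f x := by rw [h0, hI1, zero_add]
      _ = lamC q α n (0+1) * RopIter q n 0 f x := rfl
  | succ k IH =>
    intro x hx
    have hcomm := comm_LR q hq0 α (n + (k+1)) (RopIter q n (k+1) f) x hx
    have hmid : Rop q (n + (k+1) - 1) (Lop q α (RopIter q n (k+1) f)) x
        = lamC q α n (k+1) * RopIter q n (k+1) f x := by
      have e : n + (k+1) - 1 = n + k := by omega
      rw [e]
      rw [show lamC q α n (k+1) * RopIter q n (k+1) f x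
          = lamC q α n (k+1) * Rop q (n + k) (RopIter q n k f) x from rfl]
      rw [Rop, Rop, Finset.mul_sum]
      refine Finset.sum_congr rfl fun i _ => ?_
      by_cases hxi : x i = 0
      · simp [hxi]
      · rw [IH (Function.update x i (x i - 1))
          (by have := sum_update_pred x i hxi; omega)]
        ring
    have hI2 : lamC q α n (k+1)
        + (1 - (q:ℂ)) * (((Apar α h : ℝ):ℂ) * (q:ℂ) ^ (((n + (k+1) : ℕ):ℤ) + (h:ℤ) - 1)
          - (q:ℂ) ^ (-((n + (k+1) : ℕ):ℤ) - 1)) = lamC q α n (k+2) := by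
      rw [cast_pow_c1 q hh (n + (k+1)), cast_pow_c2 q (n + (k+1))]
      unfold lamC
      field_simp
      ring
    calc Lop q α (RopIter q n (k+1+1) f) x
        = Lop q α (Rop q (n + (k+1)) (RopIter q n (k+1) f)) x := rfl
      _ = Rop q (n + (k+1) - 1) (Lop q α (RopIter q n (k+1) f)) x
          + (1 - (q:ℂ)) * (((Apar α h : ℝ):ℂ) * (q:ℂ) ^ (((n + (k+1) : ℕ):ℤ) + (h:ℤ) - 1)
            - (q:ℂ) ^ (-((n + (k+1) : ℕ):ℤ) - 1)) * RopIter q n (k+1) f x := hcomm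
      _ = (lamC q α n (k+1)
          + (1 - (q:ℂ)) * (((Apar α h : ℝ):ℂ) * (q:ℂ) ^ (((n + (k+1) : ℕ):ℤ) + (h:ℤ) - 1)
            - (q:ℂ) ^ (-((n + (k+1) : ℕ):ℤ) - 1))) * RopIter q n (k+1) f x := by
          rw [hmid]; ring
      _ = lamC q α n (k+1+1) * RopIter q n (k+1) f x := by rw [hI2]

end chain
section part1
variable {h : ℕ}

lemma part1 (q : ℝ) (hq0 : 0 < q) (hq1 : q < 1) (α : Fin h → ℝ) (hα : ∀ i, 0 < α i)
    (hh : 1 ≤ h) (n : ℕ) (f : (Fin h → ℕ) → ℂ)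
    (hker : ∀ x : Fin h → ℕ, (∑ i, x i) + 1 = n → Lop q α f x = 0) :
    ∀ k, innerV q α (n+k) (RopIter q n k f) (RopIter q n k f)
      = (q:ℂ) ^ (-((k*(2*n+k+1)/2 : ℕ):ℤ)) * ((qPoch q q k : ℝ):ℂ)
        * ((qPoch q (Apar α h * q^(2*n+h)) k : ℝ):ℂ) * innerV q α n f f := by
  have hQ : (q:ℂ) ≠ 0 := Complex.ofReal_ne_zero.mpr hq0.ne'
  intro k
  induction k with
  | zero =>
    norm_num [RopIter, qPoch]
  | succ k IH =>
    have step1 : innerV q α (n+(k+1)) (RopIter q n (k+1) f) (RopIter q n (k+1) f)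
        = - innerV q α (n+k) (RopIter q n k f) (Lop q α (RopIter q n (k+1) f)) :=
      adjoint q hq0 hq1 α hα (n+k) (RopIter q n k f) (RopIter q n (k+1) f)
    have step2 : innerV q α (n+k) (RopIter q n k f) (Lop q α (RopIter q n (k+1) f))
        = lamC q α n (k+1) * innerV q α (n+k) (RopIter q n k f) (RopIter q n k f) := by
      rw [innerV_eq, innerV_eq, Finset.mul_sum]
      refine Finset.sum_congr rfl fun x hx => ?_
      have hsum : ∑ i, x i = n + k := Finset.Nat.mem_antidiagonalTuple.mp hx
      rw [chain_lemma q hq0 α hh n f hker k x hsum, map_mul, lamC_conj]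
      ring
    rw [step1, step2, IH]
    have hdiv : (k+1)*(2*n+(k+1)+1)/2 = k*(2*n+k+1)/2 + (n+k+1) := by
      have e : (k+1)*(2*n+(k+1)+1) = k*(2*n+k+1) + 2*(n+k+1) := by ring
      rw [e, Nat.add_mul_div_left _ _ (by norm_num : 0 < 2)]
    rw [qPoch_succ q q k, qPoch_succ q (Apar α h * q^(2*n+h)) k, hdiv]
    have hzp : (q:ℂ) ^ (-(((k*(2*n+k+1)/2 + (n+k+1)):ℕ):ℤ))
        = (q:ℂ) ^ (-((k*(2*n+k+1)/2:ℕ):ℤ)) * ((q:ℂ) ^ ((n+k+1:ℕ)))⁻¹ := by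
      rw [show -(((k*(2*n+k+1)/2 + (n+k+1)):ℕ):ℤ)
          = -((k*(2*n+k+1)/2:ℕ):ℤ) + -(((n+k+1:ℕ)):ℤ) by push_cast; ring,
        zpow_add₀ hQ, zpow_neg, zpow_natCast, zpow_neg, zpow_natCast]
    rw [hzp]
    unfold lamC
    rw [show 2*n+(k+1)+(h-1) = (2*n+h)+k from by omega]
    push_cast
    field_simp
    ring
end part1
section signs
variable {h : ℕ}

def wR (q : ℝ) (α : Fin h → ℝ) (N : ℕ) (y : Fin h → ℕ) : ℝ :=
  q ^ (N*(N+1)/2) * ∏ k : Fin h,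
    (qPoch q (q * α k) (y k) / qPoch q q (y k)) * (α k * q) ^ ((N:ℤ) - Xlt y ((k:ℕ)+1))

lemma wC_eq_wR (q : ℝ) (α : Fin h → ℝ) (N : ℕ) (y : Fin h → ℕ) :
    wC q α N y = ((wR q α N y : ℝ) : ℂ) := by
  unfold wC wR wFac
  push_cast
  rfl

lemma innerV_self (q : ℝ) (α : Fin h → ℝ) (N : ℕ) (f : (Fin h → ℕ) → ℂ) :
    innerV q α N f f = (((∑ x ∈ Finset.Nat.antidiagonalTuple h N,
      wR q α N x * Complex.normSq (f x)) : ℝ) : ℂ) := by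
  rw [innerV_eq]
  push_cast
  refine Finset.sum_congr rfl fun x _ => ?_
  rw [wC_eq_wR, mul_assoc, Complex.mul_conj]

lemma qPoch_pos_of_lt_one (q : ℝ) (hq0 : 0 < q) (hq1 : q < 1) (a : ℝ) (ha0 : 0 ≤ a)
    (ha1 : a < 1) (m : ℕ) : 0 < qPoch q a m := by
  refine Finset.prod_pos fun k _ => ?_
  have h1 : a * q ^ k ≤ a * 1 := by
    exact mul_le_mul_of_nonneg_left (pow_le_one₀ hq0.le hq1.le) ha0
  nlinarith

lemma qPoch_sign (q : ℝ) (m : ℕ) (a : ℝ) (hA : ∀ j : ℕ, j < m → 1 < a * q ^ j) :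
    0 < (-1)^m * qPoch q a m := by
  induction m with
  | zero => simp [qPoch]
  | succ m IH =>
    have h1 := IH (fun j hj => hA j (by omega))
    have h2 := hA m (by omega)
    rw [qPoch_succ]
    have : (-1:ℝ)^(m+1) * (qPoch q a m * (1 - a * q ^ m))
        = ((-1)^m * qPoch q a m) * (a * q ^ m - 1) := by ring
    rw [this]
    exact mul_pos h1 (by linarith)

lemma wR_pos_caseA (q : ℝ) (hq0 : 0 < q) (hq1 : q < 1) (α : Fin h → ℝ) (hα : ∀ i, 0 < α i)
    (ha : ∀ i, q * α i < 1) (N : ℕ) (y : Fin h → ℕ) : 0 < wR q α N y := by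
  unfold wR
  refine mul_pos (pow_pos hq0 _) (Finset.prod_pos fun k _ => mul_pos (div_pos ?_ ?_) ?_)
  · exact qPoch_pos_of_lt_one q hq0 hq1 _ (mul_pos hq0 (hα k)).le (ha k) _
  · exact qPoch_q_pos hq0 hq1 _
  · exact zpow_pos (mul_pos (hα k) hq0) _

lemma wR_sign_caseB (q : ℝ) (hq0 : 0 < q) (hq1 : q < 1) (α : Fin h → ℝ) (hα : ∀ i, 0 < α i)
    (N : ℕ) (hb : ∀ i, (q:ℝ) ^ (-(N:ℤ)) < α i) (n : ℕ) (hnN : n ≤ N) (y : Fin h → ℕ)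
    (hy : ∑ i, y i = n) : 0 < (-1)^n * wR q α n y := by
  have hyle : ∀ i, y i ≤ n := fun i => hy ▸ Finset.single_le_sum
    (f := y) (fun _ _ => Nat.zero_le _) (Finset.mem_univ i)
  have hsgn : ∀ i : Fin h, 0 < (-1)^(y i) * qPoch q (q * α i) (y i) := by
    intro i
    refine qPoch_sign q (y i) _ (fun j hj => ?_)
    -- 1 < (q * α i) * q ^ j, i.e. 1 < α i * q ^ (j+1), with j + 1 ≤ N
    have hj1 : j + 1 ≤ N := by have := hyle i; omega
    have hq1N : (q:ℝ) ^ (N - (j+1)) ≤ 1 := pow_le_one₀ hq0.le hq1.le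
    have hqpos : (0:ℝ) < q ^ (N - (j+1)) := pow_pos hq0 _
    have hzp : (q:ℝ) ^ (-(N:ℤ)) * q ^ (j+1) = (q ^ (N - (j+1)))⁻¹ := by
      rw [show (-(N:ℤ)) = -(((N - (j+1)) : ℕ) : ℤ) + -(((j+1):ℕ):ℤ) by push_cast; omega,
        zpow_add₀ hq0.ne', zpow_neg, zpow_neg, zpow_natCast, zpow_natCast]
      field_simp
    have h1 : 1 ≤ (q:ℝ) ^ (-(N:ℤ)) * q ^ (j+1) := by
      rw [hzp]
      exact (one_le_inv₀ hqpos).mpr hq1N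
    have h2 : (q:ℝ) ^ (-(N:ℤ)) * q ^ (j+1) < α i * q ^ (j+1) :=
      mul_lt_mul_of_pos_right (hb i) (pow_pos hq0 _)
    have : (q * α i) * q ^ j = α i * q ^ (j+1) := by ring
    rw [this]
    linarith
  have hprod : 0 < ∏ i : Fin h, ((-1:ℝ)^(y i) * (qPoch q (q * α i) (y i) / qPoch q q (y i))
      * (α i * q) ^ ((n:ℤ) - Xlt y ((i:ℕ)+1))) := by
    refine Finset.prod_pos fun i _ => ?_
    refine mul_pos ?_ (zpow_pos (by have := hα i; positivity) _)
    have hb' : 0 < qPoch q q (y i) := qPoch_q_pos hq0 hq1 _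
    have : (-1:ℝ)^(y i) * (qPoch q (q * α i) (y i) / qPoch q q (y i))
        = ((-1)^(y i) * qPoch q (q * α i) (y i)) / qPoch q q (y i) := by ring
    rw [this]
    exact div_pos (hsgn i) hb'
  have hre : ∏ i : Fin h, ((-1:ℝ)^(y i) * (qPoch q (q * α i) (y i) / qPoch q q (y i))
      * (α i * q) ^ ((n:ℤ) - Xlt y ((i:ℕ)+1)))
      = (-1)^n * ∏ i : Fin h, ((qPoch q (q * α i) (y i) / qPoch q q (y i))
        * (α i * q) ^ ((n:ℤ) - Xlt y ((i:ℕ)+1))) := by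
    rw [Finset.prod_congr rfl (fun i _ => show ((-1:ℝ)^(y i) * (qPoch q (q * α i) (y i) / qPoch q q (y i))
      * (α i * q) ^ ((n:ℤ) - Xlt y ((i:ℕ)+1)))
        = ((-1:ℝ)^(y i)) * ((qPoch q (q * α i) (y i) / qPoch q q (y i))
          * (α i * q) ^ ((n:ℤ) - Xlt y ((i:ℕ)+1))) from by ring),
      Finset.prod_mul_distrib, Finset.prod_pow_eq_pow_sum, hy]
  rw [hre] at hprod
  unfold wR
  have hqp : (0:ℝ) < q ^ (n*(n+1)/2) := pow_pos hq0 _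
  nlinarith

end signs
section final
variable {h : ℕ}

lemma inj_from_zero (q : ℝ) (α : Fin h → ℝ) (n : ℕ) (s : ℝ) (f : (Fin h → ℕ) → ℂ)
    (hzero : innerV q α n f f = 0)
    (hw : ∀ y ∈ Finset.Nat.antidiagonalTuple h n, 0 < s * wR q α n y) :
    ∀ x : Fin h → ℕ, (∑ i, x i) = n → f x = 0 := by
  rw [innerV_self] at hzero
  have hr : (∑ x ∈ Finset.Nat.antidiagonalTuple h n, wR q α n x * Complex.normSq (f x)) = 0 :=
    Complex.ofReal_eq_zero.mp hzero
  have hs : (∑ x ∈ Finset.Nat.antidiagonalTuple h n,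
      (s * wR q α n x) * Complex.normSq (f x)) = 0 := by
    have : (∑ x ∈ Finset.Nat.antidiagonalTuple h n,
        (s * wR q α n x) * Complex.normSq (f x))
        = s * ∑ x ∈ Finset.Nat.antidiagonalTuple h n, wR q α n x * Complex.normSq (f x) := by
      rw [Finset.mul_sum]
      exact Finset.sum_congr rfl fun x _ => by ring
    rw [this, hr, mul_zero]
  intro x hx
  have hmem : x ∈ Finset.Nat.antidiagonalTuple h n := Finset.Nat.mem_antidiagonalTuple.mpr hx
  have hterm := (Finset.sum_eq_zero_iff_of_nonneg
    (fun y hy => mul_nonneg (hw y hy).le (Complex.normSq_nonneg _))).mp hs x hmem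
  have hnsq : Complex.normSq (f x) = 0 :=
    (mul_eq_zero.mp hterm).resolve_left (ne_of_gt (hw x hmem))
  exact Complex.normSq_eq_zero.mp hnsq

theorem stmt6' (q : ℝ) (hq0 : 0 < q) (hq1 : q < 1) (hh : 1 ≤ h)
    (α : Fin h → ℝ) (hα : ∀ i, 0 < α i) (n N : ℕ) (hnN : n ≤ N) :
    (∀ f : (Fin h → ℕ) → ℂ,
      (n = 0 ∨ ∀ x : Fin h → ℕ, (∑ i, x i) + 1 = n → Lop q α f x = 0) →
      innerV q α N (RopIter q n (N - n) f) (RopIter q n (N - n) f) =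
        (q : ℂ) ^ (-(((N - n) * (N + n + 1) / 2 : ℕ) : ℤ)) *
          ((qPoch q q (N - n) : ℝ) : ℂ) *
          ((qPoch q (Apar α h * q ^ (2 * n + h)) (N - n) : ℝ) : ℂ) * innerV q α n f f) ∧
    (((∀ i, α i < q⁻¹) ∨ (∀ i, (q : ℝ) ^ (-(N : ℤ)) < α i)) →
      ∀ f : (Fin h → ℕ) → ℂ,
        (n = 0 ∨ ∀ x : Fin h → ℕ, (∑ i, x i) + 1 = n → Lop q α f x = 0) →
        (∀ x : Fin h → ℕ, (∑ i, x i) = N → RopIter q n (N - n) f x = 0) →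
        ∀ x : Fin h → ℕ, (∑ i, x i) = n → f x = 0) := by
  have hQ : (q:ℂ) ≠ 0 := Complex.ofReal_ne_zero.mpr hq0.ne'
  obtain ⟨k, rfl⟩ : ∃ k, N = n + k := ⟨N - n, by omega⟩
  have e1 : n + k - n = k := by omega
  have e2 : n + k + n + 1 = 2 * n + k + 1 := by omega
  have hkerof : ∀ f : (Fin h → ℕ) → ℂ,
      (n = 0 ∨ ∀ x : Fin h → ℕ, (∑ i, x i) + 1 = n → Lop q α f x = 0) →
      (∀ x : Fin h → ℕ, (∑ i, x i) + 1 = n → Lop q α f x = 0) := by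
    intro f hf
    rcases hf with rfl | hk
    · intro x hx; exact absurd hx (by omega)
    · exact hk
  have hpart1 : ∀ f : (Fin h → ℕ) → ℂ,
      (∀ x : Fin h → ℕ, (∑ i, x i) + 1 = n → Lop q α f x = 0) →
      innerV q α (n+k) (RopIter q n (n + k - n) f) (RopIter q n (n + k - n) f) =
        (q : ℂ) ^ (-(((n + k - n) * (n + k + n + 1) / 2 : ℕ) : ℤ)) *
          ((qPoch q q (n + k - n) : ℝ) : ℂ) *
          ((qPoch q (Apar α h * q ^ (2 * n + h)) (n + k - n) : ℝ) : ℂ) * innerV q α n f f := by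
    intro f hker
    rw [e1, e2]
    exact part1 q hq0 hq1 α hα hh n f hker k
  refine ⟨fun f hf => hpart1 f (hkerof f hf), ?_⟩
  intro hcase f hf hvan x hx
  rw [e1] at hvan
  have hker := hkerof f hf
  by_cases hk0 : k = 0
  · subst hk0
    have h0 := hvan x (by omega)
    exact h0
  · -- k ≥ 1
    have hGzero : innerV q α (n+k) (RopIter q n k f) (RopIter q n k f) = 0 := by
      rw [innerV_eq]
      refine Finset.sum_eq_zero fun y hy => ?_
      rw [hvan y (Finset.Nat.mem_antidiagonalTuple.mp hy)]
      ring
    have hmain := part1 q hq0 hq1 α hα hh n f hker k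
    rw [hGzero] at hmain
    have hc1 : (q : ℂ) ^ (-((k * (2*n+k+1) / 2 : ℕ) : ℤ)) ≠ 0 := zpow_ne_zero _ hQ
    have hc2 : ((qPoch q q k : ℝ) : ℂ) ≠ 0 :=
      Complex.ofReal_ne_zero.mpr (qPoch_q_pos hq0 hq1 k).ne'
    -- case analysis
    rcases hcase with hA | hB
    · -- α i < q⁻¹
      have ha' : ∀ i, q * α i < 1 := by
        intro i
        have := mul_lt_mul_of_pos_left (hA i) hq0
        rwa [mul_inv_cancel₀ hq0.ne'] at this
      haveI : Nonempty (Fin h) := ⟨⟨0, hh⟩⟩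
      have hprodlt : (∏ i : Fin h, α i * q) < 1 := by
        calc (∏ i : Fin h, α i * q) < ∏ _i : Fin h, (1:ℝ) :=
              Finset.prod_lt_prod_of_nonempty (fun i _ => mul_pos (hα i) hq0)
                (fun i _ => by have := ha' i; linarith) Finset.univ_nonempty
          _ = 1 := Finset.prod_const_one
      have hbase1 : Apar α h * q ^ (2*n+h) = (∏ i : Fin h, α i * q) * q ^ (2*n) := by
        rw [Apar_top α le_rfl, Finset.prod_mul_distrib, Finset.prod_const, Finset.card_univ,
          Fintype.card_fin, pow_add]
        ring
      have hbaselt : Apar α h * q ^ (2*n+h) < 1 := by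
        rw [hbase1]
        have h1 : (0:ℝ) < ∏ i : Fin h, α i * q :=
          Finset.prod_pos fun i _ => mul_pos (hα i) hq0
        have h2 : q ^ (2*n) ≤ 1 := pow_le_one₀ hq0.le hq1.le
        nlinarith
      have hbase0 : (0:ℝ) ≤ Apar α h * q ^ (2*n+h) :=
        mul_nonneg (Apar_pos α hα h).le (pow_nonneg hq0.le _)
      have hc3 : ((qPoch q (Apar α h * q ^ (2*n+h)) k : ℝ) : ℂ) ≠ 0 :=
        Complex.ofReal_ne_zero.mpr
          (qPoch_pos_of_lt_one q hq0 hq1 _ hbase0 hbaselt k).ne'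
      have hinner0 : innerV q α n f f = 0 := by
        have := hmain.symm
        exact (mul_eq_zero.mp this).resolve_left
          (mul_ne_zero (mul_ne_zero hc1 hc2) hc3)
      exact inj_from_zero q α n 1 f hinner0
        (fun y _ => by
          rw [one_mul]; exact wR_pos_caseA q hq0 hq1 α hα ha' n y) x hx
    · -- α i > q^(-N)
      by_cases hcrit : h = 1 ∧ 1 ≤ n
      · -- direct kernel argument
        obtain ⟨rfl, hn1⟩ := hcrit
        have hx0 : x 0 = n := by
          have := hx
          rwa [Fin.sum_univ_one] at this
        set y : Fin 1 → ℕ := fun _ => n - 1 with hy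
        have hkery := hker y (by rw [Fin.sum_univ_one]; show (n - 1) + 1 = n; omega)
        rw [Lop, Fin.sum_univ_one] at hkery
        have hupd : Function.update y 0 (y 0 + 1) = x := by
          funext j
          have hj : j = 0 := Subsingleton.elim _ _
          subst hj
          rw [Function.update_self]
          show (n - 1) + 1 = x 0
          omega
        rw [hupd] at hkery
        have hXy0 : Xlt y ((0 : Fin 1) : ℕ) = 0 := Xlt_zero y
        rw [hXy0] at hkery
        have hy0 : y 0 + 1 = n := by show (n - 1) + 1 = n; omega
        rw [hy0] at hkery
        have hgt : 1 < α 0 * q ^ n := by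
          have hb0 := hB 0
          have hkey : (q:ℝ) ^ (-((n+k : ℕ):ℤ)) * q ^ n = (q ^ k)⁻¹ := by
            rw [show (-((n+k:ℕ):ℤ)) = -((k:ℕ):ℤ) + -((n:ℕ):ℤ) by push_cast; ring,
              zpow_add₀ hq0.ne', zpow_neg, zpow_neg, zpow_natCast, zpow_natCast]
            field_simp
          have h2 : (q:ℝ) ^ (-((n+k:ℕ):ℤ)) * q ^ n < α 0 * q ^ n :=
            mul_lt_mul_of_pos_right hb0 (pow_pos hq0 _)
          have h3 : (1:ℝ) ≤ ((q:ℝ) ^ k)⁻¹ :=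
            (one_le_inv₀ (pow_pos hq0 _)).mpr (pow_le_one₀ hq0.le hq1.le)
          rw [hkey] at h2
          linarith
        have hne : ((α 0 : ℝ) : ℂ) * (q:ℂ) ^ n - 1 ≠ 0 := by
          intro hc
          have hcc : ((α 0 * q ^ n - 1 : ℝ) : ℂ) = 0 := by
            push_cast
            linear_combination hc
          have := Complex.ofReal_eq_zero.mp hcc
          linarith
        have hfactor : (((Apar α ((0:Fin 1):ℕ) : ℝ) : ℂ) * (q:ℂ) ^ (((0:Fin 1):ℕ) + 0) *
            (((α 0 : ℝ):ℂ) * (q:ℂ) ^ n - 1)) ≠ 0 := by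
          have hap : Apar α ((0:Fin 1):ℕ) = 1 := Apar_zero α
          rw [hap]
          simp only [Complex.ofReal_one, one_mul]
          exact mul_ne_zero (pow_ne_zero _ hQ) hne
        exact (mul_eq_zero.mp hkery).resolve_left hfactor
      · -- h ≥ 2 or n = 0
        have hbig : 2 ≤ h ∨ n = 0 := by
          rcases Nat.lt_or_ge h 2 with h2 | h2
          · right
            rcases Nat.eq_zero_or_pos n with rfl | hn
            · rfl
            · exact absurd ⟨by omega, hn⟩ hcrit
          · left; exact h2
        haveI : Nonempty (Fin h) := ⟨⟨0, hh⟩⟩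
        set N := n + k with hN
        have hprodgt : ((q:ℝ) ^ (N*h))⁻¹ < ∏ i : Fin h, α i := by
          have step : (∏ _i : Fin h, (q:ℝ) ^ (-(N:ℤ))) < ∏ i : Fin h, α i :=
            Finset.prod_lt_prod_of_nonempty
              (fun i _ => zpow_pos hq0 _) (fun i _ => hB i) Finset.univ_nonempty
          have : (∏ _i : Fin h, (q:ℝ) ^ (-(N:ℤ))) = ((q:ℝ) ^ (N*h))⁻¹ := by
            rw [Finset.prod_const, Finset.card_univ, Fintype.card_fin, zpow_neg, zpow_natCast,
              inv_pow, ← pow_mul]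
          rwa [this] at step
        have hfacneg : ∀ j, j < k → Apar α h * q ^ (2*n+h) * q ^ j > 1 := by
          intro j hj
          have hkey : 2*n + h + j ≤ N * h := by
            rcases hbig with h2 | rfl
            · have p1 : (0:ℤ) ≤ ((h:ℤ) - 2) * ((N:ℤ) - 1) :=
                mul_nonneg (by omega) (by omega)
              have : (2*n + h + j : ℤ) ≤ (N:ℤ) * h := by
                have hNle : (N:ℤ) = (n:ℤ) + k := by rw [hN]; push_cast; ring
                nlinarith [p1, (show (j:ℤ) + 1 ≤ (k:ℤ) by exact_mod_cast hj),
                  (show (1:ℤ) ≤ k by omega)]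
              exact_mod_cast this
            · have p1 : (0:ℤ) ≤ ((h:ℤ) - 1) * ((N:ℤ) - 1) :=
                mul_nonneg (by omega) (by omega)
              have : (2*0 + h + j : ℤ) ≤ (N:ℤ) * h := by
                have hNle : (N:ℤ) = (0:ℤ) + k := by rw [hN]; push_cast; ring
                nlinarith [p1, (show (j:ℤ) + 1 ≤ (k:ℤ) by exact_mod_cast hj),
                  (show (1:ℤ) ≤ k by omega)]
              exact_mod_cast this
          have hple : (q:ℝ) ^ (N*h) ≤ q ^ (2*n+h+j) :=
            pow_le_pow_of_le_one hq0.le hq1.le hkey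
          have hgt1 : (1:ℝ) ≤ ((q:ℝ) ^ (N*h))⁻¹ * q ^ (2*n+h+j) := by
            rw [show (1:ℝ) = ((q:ℝ) ^ (N*h))⁻¹ * q ^ (N*h) by
              field_simp]
            exact mul_le_mul_of_nonneg_left hple (by positivity)
          have hchain : ((q:ℝ) ^ (N*h))⁻¹ * q ^ (2*n+h+j) < (∏ i : Fin h, α i) * q ^ (2*n+h+j) :=
            mul_lt_mul_of_pos_right hprodgt (pow_pos hq0 _)
          have heq : Apar α h * q ^ (2*n+h) * q ^ j = (∏ i : Fin h, α i) * q ^ (2*n+h+j) := by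
            rw [Apar_top α le_rfl, pow_add]
            ring
          rw [heq]
          linarith
        have hc3 : ((qPoch q (Apar α h * q ^ (2*n+h)) k : ℝ) : ℂ) ≠ 0 := by
          refine Complex.ofReal_ne_zero.mpr ?_
          unfold qPoch
          refine Finset.prod_ne_zero_iff.mpr fun j hj => ?_
          have := hfacneg j (Finset.mem_range.mp hj)
          have : 1 - Apar α h * q ^ (2*n+h) * q ^ j < 0 := by linarith
          linarith
        have hinner0 : innerV q α n f f = 0 := by
          have := hmain.symm
          exact (mul_eq_zero.mp this).resolve_left
            (mul_ne_zero (mul_ne_zero hc1 hc2) hc3)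
        exact inj_from_zero q α n ((-1)^n) f hinner0
          (fun y hy => wR_sign_caseB q hq0 hq1 α hα N hB n (by omega) y
            (Finset.Nat.mem_antidiagonalTuple.mp hy)) x hx

end final

theorem stmt6 (q : ℝ) (hq0 : 0 < q) (hq1 : q < 1) (h : ℕ) (hh : 1 ≤ h)
    (α : Fin h → ℝ) (hα : ∀ i, 0 < α i) (n N : ℕ) (hnN : n ≤ N) :
    (∀ f : (Fin h → ℕ) → ℂ,
      (n = 0 ∨ ∀ x : Fin h → ℕ, (∑ i, x i) + 1 = n → Lop q α f x = 0) →
      innerV q α N (RopIter q n (N - n) f) (RopIter q n (N - n) f) =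
        (q : ℂ) ^ (-(((N - n) * (N + n + 1) / 2 : ℕ) : ℤ)) *
          ((qPoch q q (N - n) : ℝ) : ℂ) *
          ((qPoch q (Apar α h * q ^ (2 * n + h)) (N - n) : ℝ) : ℂ) * innerV q α n f f) ∧
    (((∀ i, α i < q⁻¹) ∨ (∀ i, (q : ℝ) ^ (-(N : ℤ)) < α i)) →
      ∀ f : (Fin h → ℕ) → ℂ,
        (n = 0 ∨ ∀ x : Fin h → ℕ, (∑ i, x i) + 1 = n → Lop q α f x = 0) →
        (∀ x : Fin h → ℕ, (∑ i, x i) = N → RopIter q n (N - n) f x = 0) →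
        ∀ x : Fin h → ℕ, (∑ i, x i) = n → f x = 0) :=
  stmt6' q hq0 hq1 hh α hα n N hnN
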